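/- (Model 2e3a4h) Define vector fields on ℝ⁴ (coordinates (x,y,u,v)) by e₁ = ∂x + y∂u + 2x∂v, e₂ = −3y∂x + ∂y + x∂u − 6u∂v, e₃ = 2x∂x + y∂y + 3u∂u + 4v∂v, and let S = {(x, y, xy + y³, x² − (3/2)y⁴) : (x,y) ∈ ℝ²}. Then: (i) each of e₁, e₂, e₃ is tangent to S; (ii) at every point of S the first two components of e₁ and e₂, namely (1, 0) and (−3y, 1), are linearly independent, so S is affinely homogeneous; (iii) with bracket [X,Y](p) = (DY)(p)(X(p)) − (DX)(p)(Y(p)) one has [e₁,e₂] = 0, [e₁,e₃] = 2·e₁, [e₂,e₃] = e₂. -/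

import Mathlib

namespace Model2e3a4h

/-- Lie bracket of vector fields on `ℝ⁴`, `[X,Y](p) = DY(p)(X(p)) − DX(p)(Y(p))`. -/
noncomputable def lieBracket (X Y : (Fin 4 → ℝ) → Fin 4 → ℝ) :
    (Fin 4 → ℝ) → Fin 4 → ℝ :=
  fun p => fderiv ℝ Y p (X p) - fderiv ℝ X p (Y p)

/-- Tangency of a vector field `X` on `ℝ⁴ ∋ (x,y,u,v)` to the graph
`S = {(x, y, F(x,y), G(x,y))}`. -/
def TangentToGraph (F G : ℝ × ℝ → ℝ) (X : (Fin 4 → ℝ) → Fin 4 → ℝ) : Prop :=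
  ∀ p : ℝ × ℝ,
    X ![p.1, p.2, F p, G p] 2
        = fderiv ℝ F p (1, 0) * X ![p.1, p.2, F p, G p] 0
          + fderiv ℝ F p (0, 1) * X ![p.1, p.2, F p, G p] 1 ∧
    X ![p.1, p.2, F p, G p] 3
        = fderiv ℝ G p (1, 0) * X ![p.1, p.2, F p, G p] 0
          + fderiv ℝ G p (0, 1) * X ![p.1, p.2, F p, G p] 1

/-- `u = xy + y³`. -/
noncomputable def F : ℝ × ℝ → ℝ := fun p => p.1 * p.2 + p.2 ^ 3
/-- `v = x² − (3/2)y⁴`. -/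
noncomputable def G : ℝ × ℝ → ℝ := fun p => p.1 ^ 2 - (3 / 2) * p.2 ^ 4

/-- `e₁ = ∂x + y∂u + 2x∂v`. -/
noncomputable def e₁ : (Fin 4 → ℝ) → Fin 4 → ℝ := fun p => ![1, 0, p 1, 2 * p 0]
/-- `e₂ = −3y∂x + ∂y + x∂u − 6u∂v`. -/
noncomputable def e₂ : (Fin 4 → ℝ) → Fin 4 → ℝ := fun p => ![-3 * p 1, 1, p 0, -6 * p 2]
/-- `e₃ = 2x∂x + y∂y + 3u∂u + 4v∂v`. -/
noncomputable def e₃ : (Fin 4 → ℝ) → Fin 4 → ℝ :=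
  fun p => ![2 * p 0, p 1, 3 * p 2, 4 * p 3]

-- derivatives of F and G
lemma hF (p : ℝ × ℝ) :
    HasFDerivAt F
      ((p.1 • ContinuousLinearMap.snd ℝ ℝ ℝ + p.2 • ContinuousLinearMap.fst ℝ ℝ ℝ)
        + (3 * p.2 ^ 2) • ContinuousLinearMap.snd ℝ ℝ ℝ) p := by
  have h1 := (hasFDerivAt_fst (𝕜 := ℝ) (p := p)).mul (hasFDerivAt_snd (𝕜 := ℝ) (p := p))
  have h2 := (hasDerivAt_pow 3 p.2).comp_hasFDerivAt p (hasFDerivAt_snd (𝕜 := ℝ) (p := p))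
  have := h1.add h2
  simp only [Function.comp_def] at this
  rw [show F = (Prod.fst * Prod.snd + fun x : ℝ × ℝ => x.2 ^ 3) by funext x; simp [F]]
  simpa using this

lemma fderivF1 (p : ℝ × ℝ) : fderiv ℝ F p (1, 0) = p.2 := by
  rw [(hF p).fderiv]; simp

lemma fderivF2 (p : ℝ × ℝ) : fderiv ℝ F p (0, 1) = p.1 + 3 * p.2 ^ 2 := by
  rw [(hF p).fderiv]; simp

lemma hG (p : ℝ × ℝ) :
    HasFDerivAt G
      ((2 * p.1 ^ 1) • ContinuousLinearMap.fst ℝ ℝ ℝ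
        - (3 / 2 : ℝ) • ((4 * p.2 ^ 3) • ContinuousLinearMap.snd ℝ ℝ ℝ)) p := by
  have h1 := (hasDerivAt_pow 2 p.1).comp_hasFDerivAt p (hasFDerivAt_fst (𝕜 := ℝ) (p := p))
  have h2 := ((hasDerivAt_pow 4 p.2).comp_hasFDerivAt p (hasFDerivAt_snd (𝕜 := ℝ) (p := p))).const_smul (3 / 2 : ℝ)
  have := h1.sub h2
  simp only [Function.comp_def] at this
  rw [show G = ((fun x : ℝ × ℝ => x.1 ^ 2) - (3 / 2 : ℝ) • fun x : ℝ × ℝ => x.2 ^ 4) by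
    funext x; simp [G]]
  simpa using this

lemma fderivG1 (p : ℝ × ℝ) : fderiv ℝ G p (1, 0) = 2 * p.1 := by
  rw [(hG p).fderiv]; simp

lemma fderivG2 (p : ℝ × ℝ) : fderiv ℝ G p (0, 1) = -(6 * p.2 ^ 3) := by
  rw [(hG p).fderiv]; simp; ring

-- linear maps: derivatives of the vector fields
noncomputable def L₁ : (Fin 4 → ℝ) →L[ℝ] (Fin 4 → ℝ) :=
  ContinuousLinearMap.pi ![0, 0, ContinuousLinearMap.proj 1, (2 : ℝ) • ContinuousLinearMap.proj 0]
noncomputable def L₂ : (Fin 4 → ℝ) →L[ℝ] (Fin 4 → ℝ) :=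
  ContinuousLinearMap.pi ![(-3 : ℝ) • ContinuousLinearMap.proj 1, 0, ContinuousLinearMap.proj 0,
    (-6 : ℝ) • ContinuousLinearMap.proj 2]
noncomputable def L₃ : (Fin 4 → ℝ) →L[ℝ] (Fin 4 → ℝ) :=
  ContinuousLinearMap.pi ![(2 : ℝ) • ContinuousLinearMap.proj 0, ContinuousLinearMap.proj 1,
    (3 : ℝ) • ContinuousLinearMap.proj 2, (4 : ℝ) • ContinuousLinearMap.proj 3]

lemma he₁ (p : Fin 4 → ℝ) : HasFDerivAt e₁ L₁ p := by
  rw [hasFDerivAt_pi']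
  intro i
  fin_cases i <;>
    simp only [e₁, L₁, ContinuousLinearMap.proj_pi, Matrix.cons_val_zero, Matrix.cons_val_one,
      Matrix.head_cons, Matrix.cons_val_two, Matrix.tail_cons, Matrix.cons_val_three,
      Fin.isValue] <;>
  · first
    | exact hasFDerivAt_const _ _
    | exact (hasFDerivAt_apply _ _)
    | exact ((hasFDerivAt_apply 0 p).const_mul 2).congr_fderiv (by ext v; simp [mul_comm])

lemma he₂ (p : Fin 4 → ℝ) : HasFDerivAt e₂ L₂ p := by
  rw [hasFDerivAt_pi']
  intro i
  fin_cases i <;>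
    simp only [e₂, L₂, ContinuousLinearMap.proj_pi, Matrix.cons_val_zero, Matrix.cons_val_one,
      Matrix.head_cons, Matrix.cons_val_two, Matrix.tail_cons, Matrix.cons_val_three,
      Fin.isValue] <;>
  · first
    | exact hasFDerivAt_const _ _
    | exact (hasFDerivAt_apply _ _)
    | exact ((hasFDerivAt_apply 1 p).const_mul (-3)).congr_fderiv (by ext v; simp [mul_comm])
    | exact ((hasFDerivAt_apply 2 p).const_mul (-6)).congr_fderiv (by ext v; simp [mul_comm])

lemma he₃ (p : Fin 4 → ℝ) : HasFDerivAt e₃ L₃ p := by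
  rw [hasFDerivAt_pi']
  intro i
  fin_cases i <;>
    simp only [e₃, L₃, ContinuousLinearMap.proj_pi, Matrix.cons_val_zero, Matrix.cons_val_one,
      Matrix.head_cons, Matrix.cons_val_two, Matrix.tail_cons, Matrix.cons_val_three,
      Fin.isValue] <;>
  · first
    | exact (hasFDerivAt_apply _ _)
    | exact ((hasFDerivAt_apply 0 p).const_mul 2).congr_fderiv (by ext v; simp [mul_comm])
    | exact ((hasFDerivAt_apply 2 p).const_mul 3).congr_fderiv (by ext v; simp [mul_comm])
    | exact ((hasFDerivAt_apply 3 p).const_mul 4).congr_fderiv (by ext v; simp [mul_comm])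

/-- **Model 2e3a4h:** the surface `{u = xy + y³, v = x² − (3/2)y⁴}` is affinely
homogeneous, with tangent vector fields `e₁, e₂, e₃` satisfying
`[e₁,e₂] = 0`, `[e₁,e₃] = 2e₁`, `[e₂,e₃] = e₂`. -/
theorem model_2e3a4h :
    (TangentToGraph F G e₁ ∧ TangentToGraph F G e₂ ∧ TangentToGraph F G e₃) ∧
    (∀ p : ℝ × ℝ,
      e₁ ![p.1, p.2, F p, G p] 0 = 1 ∧ e₁ ![p.1, p.2, F p, G p] 1 = 0 ∧
      e₂ ![p.1, p.2, F p, G p] 0 = -3 * p.2 ∧ e₂ ![p.1, p.2, F p, G p] 1 = 1 ∧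
      LinearIndependent ℝ
        ![((e₁ ![p.1, p.2, F p, G p] 0, e₁ ![p.1, p.2, F p, G p] 1) : ℝ × ℝ),
          ((e₂ ![p.1, p.2, F p, G p] 0, e₂ ![p.1, p.2, F p, G p] 1) : ℝ × ℝ)]) ∧
    (lieBracket e₁ e₂ = 0 ∧ lieBracket e₁ e₃ = (2 : ℝ) • e₁ ∧
      lieBracket e₂ e₃ = e₂) := by
  refine ⟨⟨?_, ?_, ?_⟩, ?_, ?_, ?_, ?_⟩
  · intro p
    simp [e₁, F, G, fderivF1, fderivF2, fderivG1, fderivG2]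
  · intro p
    constructor
    · simp [e₂, F, fderivF1, fderivF2]; ring
    · simp [e₂, F, G, fderivG1, fderivG2]; ring
  · intro p
    constructor
    · simp [e₃, F, fderivF1, fderivF2]; ring
    · simp [e₃, F, G, fderivG1, fderivG2]; ring
  · intro p
    refine ⟨rfl, rfl, rfl, rfl, ?_⟩
    rw [linearIndependent_fin2]
    constructor
    · simp [e₁, e₂, Prod.ext_iff]
    · intro a h
      simp only [e₁, e₂, Matrix.cons_val_zero, Matrix.cons_val_one, Matrix.head_cons,
        Prod.smul_mk, smul_eq_mul, Prod.mk.injEq, Matrix.cons_val', Matrix.cons_val_fin_one,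
        Matrix.empty_val'] at h
      simp at h
      obtain ⟨h1, h2⟩ := h
      subst h2
      simp at h1
  · funext p
    simp only [lieBracket, (he₁ p).fderiv, (he₂ p).fderiv]
    funext i
    fin_cases i <;>
      simp [L₁, L₂, e₁, e₂, ContinuousLinearMap.pi_apply] <;> ring
  · funext p
    simp only [lieBracket, (he₁ p).fderiv, (he₃ p).fderiv]
    funext i
    fin_cases i <;>
      simp [L₁, L₃, e₁, e₃, ContinuousLinearMap.pi_apply] <;> ring
  · funext p
    simp only [lieBracket, (he₂ p).fderiv, (he₃ p).fderiv]
    funext i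
    fin_cases i <;>
      simp [L₂, L₃, e₂, e₃, ContinuousLinearMap.pi_apply] <;> ring

end Model2e3a4h
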